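/- Let n be a positive integer and k an integer with 0 ≤ k ≤ n−1. For every z ∈ ℂ with z, z−1, ..., z−k ∉ (−∞,0] and every s with Re(s) > 2n, one has the identity Σ_{l=1}^∞ [ C(2n+l−1, l+k)·C(l+k−1, k) + C(2n+l−1, k)·C(2n+l−k−2, l−1) ] (z+l)^{−s} = Σ_{j=0}^{k} (−1)^j C(2n, k−j) ( ζ_{2n}(s, z−j) + ζ_{2n}(s, z+j+1) ) + (−1)^{k+1} (z−k)^{−s}, where ζ_{2n}(s,w) = Σ_{l=0}^∞ C(2n+l−1, l)(w+l)^{−s} is the multiple Hurwitz zeta function. -/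

import Mathlib

open Complex Finset Asymptotics Filter

/-- The multiple Hurwitz zeta function
`ζ_m(s, w) = ∑_{l=0}^∞ C(m+l-1, l) (w+l)^{-s}` (principal branch powers). -/
noncomputable def multipleHurwitzZeta (m : ℕ) (s w : ℂ) : ℂ :=
  ∑' l : ℕ, (((m + l - 1).choose l : ℕ) : ℂ) * (w + (l : ℂ)) ^ (-s)





private lemma fact_succ_q (b c : ℕ) (h : b = c + 1) :
    ((b.factorial : ℚ)) = (b : ℚ) * c.factorial := by
  subst h; rw [Nat.factorial_succ]; push_cast; ring

private lemma fact_ne (q : ℕ) : ((q.factorial : ℚ)) ≠ 0 :=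
  Nat.cast_ne_zero.mpr q.factorial_ne_zero

lemma star' (M K m : ℕ) (hK : K + 1 < M) :
    (M+m).choose (m+K+2) * (m+K+1).choose (K+1) + (M+m+1).choose (m+K+2) * (m+K+1).choose K
      = M.choose (K+1) * (M+m).choose (m+1) := by
  obtain ⟨a, rfl⟩ : ∃ a, M = K + 2 + a := ⟨M - K - 2, by omega⟩
  have key : ((K+2+a+m).choose (m+K+2) * (m+K+1).choose (K+1)
      + (K+2+a+m+1).choose (m+K+2) * (m+K+1).choose K : ℚ)
      = (K+2+a).choose (K+1) * (K+2+a+m).choose (m+1) := by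
    rw [Nat.cast_choose ℚ (by omega : m+K+2 ≤ K+2+a+m),
        Nat.cast_choose ℚ (by omega : K+1 ≤ m+K+1),
        Nat.cast_choose ℚ (by omega : m+K+2 ≤ K+2+a+m+1),
        Nat.cast_choose ℚ (by omega : K ≤ m+K+1),
        Nat.cast_choose ℚ (by omega : K+1 ≤ K+2+a),
        Nat.cast_choose ℚ (by omega : m+1 ≤ K+2+a+m)]
    rw [show K+2+a+m - (m+K+2) = a by omega,
        show m+K+1 - (K+1) = m by omega,
        show K+2+a+m+1 - (m+K+2) = a+1 by omega,
        show m+K+1 - K = m+1 by omega,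
        show K+2+a - (K+1) = a+1 by omega,
        show K+2+a+m - (m+1) = K+a+1 by omega]
    rw [fact_succ_q (m+K+2) (m+K+1) (by omega),
        fact_succ_q (K+2+a+m+1) (K+2+a+m) rfl,
        fact_succ_q (a+1) a rfl,
        fact_succ_q (K+1) K rfl,
        fact_succ_q (m+1) m rfl,
        fact_succ_q (K+2+a) (K+a+1) (by omega)]
    have h1 := fact_ne (K+2+a+m)
    have h2 := fact_ne (m+K+1)
    have h3 := fact_ne a
    have h4 := fact_ne K
    have h5 := fact_ne m
    have h6 := fact_ne (K+a+1)
    field_simp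
    push_cast
    ring
  exact_mod_cast key

lemma dstar' (M k i : ℕ) (h : k + 1 < M) :
    (M+i+1).choose (k+1) * ((M+i-k-1).choose (i+1)) + (M+i).choose k * ((M+i-k-1).choose i)
      = M.choose (k+1) * (M+i).choose (i+1) := by
  obtain ⟨a, rfl⟩ : ∃ a, M = k + 2 + a := ⟨M - k - 2, by omega⟩
  have e : k+2+a+i-k-1 = a+i+1 := by omega
  rw [e]
  have key : (((k+2+a+i+1).choose (k+1) * (a+i+1).choose (i+1)
      + (k+2+a+i).choose k * (a+i+1).choose i : ℕ) : ℚ)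
      = (((k+2+a).choose (k+1) * (k+2+a+i).choose (i+1) : ℕ) : ℚ) := by
    push_cast
    rw [Nat.cast_choose ℚ (by omega : k+1 ≤ k+2+a+i+1),
        Nat.cast_choose ℚ (by omega : i+1 ≤ a+i+1),
        Nat.cast_choose ℚ (by omega : k ≤ k+2+a+i),
        Nat.cast_choose ℚ (by omega : i ≤ a+i+1),
        Nat.cast_choose ℚ (by omega : k+1 ≤ k+2+a),
        Nat.cast_choose ℚ (by omega : i+1 ≤ k+2+a+i)]
    rw [show k+2+a+i+1 - (k+1) = a+i+2 by omega,
        show a+i+1 - (i+1) = a by omega,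
        show k+2+a+i - k = a+i+2 by omega,
        show a+i+1 - i = a+1 by omega,
        show k+2+a - (k+1) = a+1 by omega,
        show k+2+a+i - (i+1) = k+a+1 by omega]
    rw [fact_succ_q (k+2+a+i+1) (k+2+a+i) rfl,
        fact_succ_q (a+i+2) (a+i+1) (by omega),
        fact_succ_q (a+i+1) (a+i) rfl,
        fact_succ_q (a+1) a rfl,
        fact_succ_q (k+1) k rfl,
        fact_succ_q (i+1) i rfl,
        fact_succ_q (k+2+a) (k+a+1) (by omega)]
    have h1 := fact_ne (k+2+a+i)
    have h2 := fact_ne (a+i)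
    have h3 := fact_ne a
    have h4 := fact_ne k
    have h5 := fact_ne i
    have h6 := fact_ne (k+a+1)
    field_simp
    push_cast
    ring
  exact_mod_cast key



lemma Tsum' (M : ℕ) : ∀ k, k < M → ∀ m : ℕ,
    ∑ j ∈ range (k+1), (-1:ℂ)^j * (M.choose (k-j) : ℂ) * ((M+m+j).choose (m+1+j) : ℂ)
      = ((M+m).choose (m+1+k) : ℂ) * ((m+k).choose k : ℂ)
  | 0, _, m => by simp
  | (k+1), hk, m => by
    rw [Finset.sum_range_succ']
    have hcongr : ∀ j ∈ range (k+1),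
        (-1:ℂ)^(j+1) * (M.choose (k+1-(j+1)) : ℂ) * ((M+m+(j+1)).choose (m+1+(j+1)) : ℂ)
        = -((-1:ℂ)^j * (M.choose (k-j) : ℂ) * ((M+(m+1)+j).choose ((m+1)+1+j) : ℂ)) := by
      intro j _
      rw [show k+1-(j+1) = k - j by omega, show M+m+(j+1) = M+(m+1)+j by omega,
          show m+1+(j+1) = (m+1)+1+j by omega, pow_succ]
      ring
    rw [Finset.sum_congr rfl hcongr, Finset.sum_neg_distrib,
        Tsum' M k (by omega) (m+1)]
    have h := congrArg (Nat.cast : ℕ → ℂ) (star' M k m (by omega))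
    push_cast at h
    rw [show m+1+(k+1) = m+k+2 by omega, show m+(k+1) = m+k+1 by omega,
        show (m+1)+1+k = m+k+2 by omega, show (m+1)+k = m+k+1 by omega,
        show M+(m+1) = M+m+1 by omega]
    simp only [pow_zero, one_mul, Nat.sub_zero, Nat.add_zero, add_zero]
    linear_combination -h

lemma T0 (M K : ℕ) (h : K + 1 < M) :
    ∑ j ∈ range (K+2), (-1:ℂ)^j * (M.choose (K+1-j) : ℂ) * ((M+j-1).choose j : ℂ) = 0 := by
  rw [Finset.sum_range_succ']
  have hcongr : ∀ j ∈ range (K+1),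
      (-1:ℂ)^(j+1) * (M.choose (K+1-(j+1)) : ℂ) * ((M+(j+1)-1).choose (j+1) : ℂ)
      = -((-1:ℂ)^j * (M.choose (K-j) : ℂ) * ((M+0+j).choose (0+1+j) : ℂ)) := by
    intro j _
    rw [pow_succ, show K+1-(j+1) = K - j by omega, show M+(j+1)-1 = M+0+j by omega,
        show j+1 = 0+1+j by omega]
    ring
  rw [Finset.sum_congr rfl hcongr, Finset.sum_neg_distrib, Tsum' M K (by omega) 0,
      show 0+1+K = K+1 by omega]
  simp

lemma BB' (M k t : ℕ) (ht : t ≤ k) (hkM : k < M) :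
    ∑ j ∈ range (k+1), (-1:ℂ)^j * (M.choose (k-j) : ℂ) *
        (if t ≤ j then ((M+j-t-1).choose (j-t) : ℂ) else 0)
      = if t = k then (-1:ℂ)^k else 0 := by
  have hsplit : range (k+1) = range t ∪ Finset.Ico t (k+1) := by
    rw [Finset.range_eq_Ico, ← Finset.Ico_union_Ico_eq_Ico (Nat.zero_le t) (by omega), Finset.range_eq_Ico]
  rw [hsplit, Finset.sum_union (by
    simp [Finset.disjoint_left]; intro a ha; omega)]
  have h1 : ∑ j ∈ range t, (-1:ℂ)^j * (M.choose (k-j) : ℂ) *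
      (if t ≤ j then ((M+j-t-1).choose (j-t) : ℂ) else 0) = 0 := by
    apply Finset.sum_eq_zero
    intro j hj
    rw [if_neg (by simp at hj; omega)]
    ring
  rw [h1, zero_add, Finset.sum_Ico_eq_sum_range]
  have h2 : ∀ i ∈ range (k+1-t),
      (-1:ℂ)^(t+i) * (M.choose (k-(t+i)) : ℂ) *
        (if t ≤ t+i then ((M+(t+i)-t-1).choose (t+i-t) : ℂ) else 0)
      = (-1:ℂ)^t * ((-1:ℂ)^i * (M.choose ((k-t)-i) : ℂ) * ((M+i-1).choose i : ℂ)) := by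
    intro i _
    rw [if_pos (by omega), pow_add, show k-(t+i) = (k-t)-i by omega,
        show M+(t+i)-t-1 = M+i-1 by omega, show t+i-t = i by omega]
    ring
  rw [Finset.sum_congr rfl h2, ← Finset.mul_sum]
  rcases eq_or_lt_of_le ht with rfl | hlt
  · rw [if_pos rfl, show t+1-t = 1 by omega]
    simp
  · rw [if_neg (by omega)]
    obtain ⟨K, hK⟩ : ∃ K, k - t = K + 1 := ⟨k-t-1, by omega⟩
    rw [show k+1-t = (k-t)+1 by omega, hK]
    rw [show K+1+1 = K+2 by rfl]
    have := T0 M K (by omega)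
    rw [show (∑ j ∈ range (K+2), (-1:ℂ)^j * (M.choose (K+1-j) : ℂ) * ((M+j-1).choose j : ℂ))
        = ∑ i ∈ range (K+2), (-1:ℂ)^i * (M.choose ((K+1)-i) : ℂ) * ((M+i-1).choose i : ℂ) from rfl] at this
    rw [this, mul_zero]

lemma Usum' (M : ℕ) (hM : 1 ≤ M) : ∀ k, k < M → ∀ i : ℕ,
    ∑ j ∈ range (k+1), (-1:ℂ)^j * (M.choose (k-j) : ℂ) *
        (if j ≤ i then ((M+i-j-1).choose (i-j) : ℂ) else 0)
      = ((M+i).choose k : ℂ) * ((M+i-k-1).choose i : ℂ)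
  | 0, _, i => by simp
  | (k+1), hk, i => by
    rw [Finset.sum_range_succ']
    rcases i with _ | i'
    · have hz : ∀ j ∈ range (k+1),
          (-1:ℂ)^(j+1) * (M.choose (k+1-(j+1)) : ℂ) *
            (if j+1 ≤ 0 then ((M+0-(j+1)-1).choose (0-(j+1)) : ℂ) else 0) = 0 := by
        intro j _
        rw [if_neg (by omega)]
        ring
      rw [Finset.sum_congr rfl hz, Finset.sum_const_zero, zero_add]
      simp
    · have hcongr : ∀ j ∈ range (k+1),
          (-1:ℂ)^(j+1) * (M.choose (k+1-(j+1)) : ℂ) *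
            (if j+1 ≤ i'+1 then ((M+(i'+1)-(j+1)-1).choose ((i'+1)-(j+1)) : ℂ) else 0)
          = -((-1:ℂ)^j * (M.choose (k-j) : ℂ) *
            (if j ≤ i' then ((M+i'-j-1).choose (i'-j) : ℂ) else 0)) := by
        intro j _
        rw [pow_succ, show k+1-(j+1) = k-j by omega]
        by_cases hji : j ≤ i'
        · rw [if_pos (by omega), if_pos hji, show M+(i'+1)-(j+1)-1 = M+i'-j-1 by omega,
              show (i'+1)-(j+1) = i'-j by omega]
          ring
        · rw [if_neg (by omega), if_neg hji]
          ring
      rw [Finset.sum_congr rfl hcongr, Finset.sum_neg_distrib, Usum' M hM k (by omega) i']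
      have h := congrArg (Nat.cast : ℕ → ℂ) (dstar' M k i' (by omega))
      push_cast at h
      rw [if_pos (by omega : 0 ≤ i'+1)]
      rw [show k+1-0 = k+1 by omega, show M+(i'+1)-0-1 = M+i' by omega,
          show (i'+1)-0 = i'+1 by omega, show M+(i'+1) = M+i'+1 by omega,
          show M+i'+1-(k+1)-1 = M+i'-k-1 by omega]
      simp only [pow_zero, one_mul]
      linear_combination -h



lemma summ_master (w s : ℂ) (p : ℕ) (A : ℝ) (hs : (p:ℝ) + 1 < s.re)
    (c : ℕ → ℂ) (hc : ∀ i, ‖c i‖ ≤ A * ((i:ℝ)+1)^p) :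
    Summable fun i : ℕ => c i * (w + (i:ℂ)) ^ (-s) := by
  have hA : 0 ≤ A := by
    have h0 := hc 0
    simp only [Nat.cast_zero, zero_add, one_pow, mul_one] at h0
    exact le_trans (norm_nonneg _) h0
  apply Summable.of_norm
  have hsum : Summable (fun i : ℕ => (i:ℝ) ^ ((p:ℝ) - s.re)) :=
    Real.summable_nat_rpow.2 (by linarith)
  apply summable_of_isBigO_nat hsum
  rw [isBigO_iff]
  refine ⟨A * 2^p * Real.exp (Real.pi * |s.im|) * (2:ℝ) ^ s.re, ?_⟩
  filter_upwards [eventually_ge_atTop (max 1 ⌈2 * ‖w‖⌉₊)] with i hi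
  have hi1 : (1:ℝ) ≤ (i:ℝ) := by
    have : 1 ≤ i := le_trans (le_max_left _ _) hi
    exact_mod_cast this
  have hiw : 2 * ‖w‖ ≤ (i:ℝ) := by
    calc 2 * ‖w‖ ≤ (⌈2 * ‖w‖⌉₊ : ℝ) := Nat.le_ceil _
    _ ≤ (i:ℝ) := by exact_mod_cast le_trans (le_max_right _ _) hi
  have hpos : (0:ℝ) < (i:ℝ) := by linarith
  have habs : (i:ℝ)/2 ≤ ‖w + (i:ℂ)‖ := by
    have h1 : ‖(i:ℂ)‖ ≤ ‖w + i‖ + ‖w‖ := by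
      calc ‖(i:ℂ)‖ = ‖(w + i) + (-w)‖ := by congr 1; ring
      _ ≤ ‖w + i‖ + ‖-w‖ := norm_add_le _ _
      _ = ‖w + i‖ + ‖w‖ := by rw [norm_neg]
    rw [Complex.norm_natCast] at h1
    have hw : 0 ≤ ‖w‖ := norm_nonneg w
    linarith
  have hcpow : ‖(w + (i:ℂ)) ^ (-s)‖ ≤
      ‖w + i‖ ^ (-s.re) * Real.exp (Real.pi * |s.im|) := by
    have h1 : ‖(w + (i:ℂ)) ^ (-s)‖ ≤
        ‖w + i‖ ^ (-s).re / Real.exp (Complex.arg (w + i) * (-s).im) :=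
      Complex.norm_cpow_le _ _
    have h2 : Real.exp (-(Real.pi * |s.im|)) ≤ Real.exp (Complex.arg (w + i) * (-s).im) := by
      apply Real.exp_le_exp.2
      have := Complex.abs_arg_le_pi (w + i)
      have h3 : |Complex.arg (w + i) * (-s).im| ≤ Real.pi * |s.im| := by
        rw [abs_mul]
        simp only [Complex.neg_im, abs_neg]
        have hπ : 0 ≤ Real.pi := Real.pi_pos.le
        exact mul_le_mul_of_nonneg_right this (abs_nonneg _)
      linarith [neg_abs_le (Complex.arg (w + i) * (-s).im)]
    calc ‖(w + (i:ℂ)) ^ (-s)‖ ≤ ‖w + i‖ ^ (-s).re / Real.exp (Complex.arg (w + i) * (-s).im) := h1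
    _ ≤ ‖w + i‖ ^ (-s).re / Real.exp (-(Real.pi * |s.im|)) := by
        apply div_le_div_of_nonneg_left _ (Real.exp_pos _) h2
        positivity
    _ = ‖w + i‖ ^ (-s.re) * Real.exp (Real.pi * |s.im|) := by
        rw [Real.exp_neg, div_inv_eq_mul]
        simp
  have habspow : ‖w + i‖ ^ (-s.re) ≤ ((i:ℝ)/2) ^ (-s.re) := by
    apply Real.rpow_le_rpow_of_nonpos (by linarith) habs (by linarith)
  have hdiv : ((i:ℝ)/2) ^ (-s.re) = (i:ℝ) ^ (-s.re) * (2:ℝ) ^ s.re := by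
    rw [Real.div_rpow (by linarith) (by norm_num), Real.rpow_neg (by norm_num : (0:ℝ) ≤ 2)]
    field_simp
  have hcbound : ‖c i‖ ≤ A * 2^p * (i:ℝ)^(p:ℝ) := by
    calc ‖c i‖ ≤ A * ((i:ℝ)+1)^p := hc i
    _ ≤ A * (2*(i:ℝ))^p := by
        apply mul_le_mul_of_nonneg_left _ hA
        apply pow_le_pow_left₀ (by linarith) (by linarith) _
    _ = A * 2^p * (i:ℝ)^p := by rw [mul_pow]; ring
    _ = A * 2^p * (i:ℝ)^(p:ℝ) := by rw [Real.rpow_natCast]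
  have hnorm : ‖c i * (w + (i:ℂ)) ^ (-s)‖ = ‖c i‖ * ‖(w + (i:ℂ)) ^ (-s)‖ := norm_mul _ _
  rw [norm_norm, hnorm]
  have key : ‖c i‖ * ‖(w + (i:ℂ)) ^ (-s)‖ ≤
      (A * 2^p * (i:ℝ)^(p:ℝ)) * (((i:ℝ)^(-s.re) * (2:ℝ)^s.re) * Real.exp (Real.pi * |s.im|)) := by
    apply mul_le_mul hcbound _ (norm_nonneg _) (by positivity)
    calc ‖(w + (i:ℂ)) ^ (-s)‖ ≤ ‖w + i‖ ^ (-s.re) * Real.exp (Real.pi * |s.im|) := hcpow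
    _ ≤ ((i:ℝ)/2) ^ (-s.re) * Real.exp (Real.pi * |s.im|) :=
        mul_le_mul_of_nonneg_right habspow (Real.exp_pos _).le
    _ = ((i:ℝ)^(-s.re) * (2:ℝ)^s.re) * Real.exp (Real.pi * |s.im|) := by rw [hdiv]
  calc ‖c i‖ * ‖(w + (i:ℂ)) ^ (-s)‖ ≤
      (A * 2^p * (i:ℝ)^(p:ℝ)) * (((i:ℝ)^(-s.re) * (2:ℝ)^s.re) * Real.exp (Real.pi * |s.im|)) := key
  _ = (A * 2^p * Real.exp (Real.pi * |s.im|) * (2:ℝ) ^ s.re) * ((i:ℝ)^(p:ℝ) * (i:ℝ)^(-s.re)) := by ring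
  _ = (A * 2^p * Real.exp (Real.pi * |s.im|) * (2:ℝ) ^ s.re) * (i:ℝ) ^ ((p:ℝ) - s.re) := by
      rw [← Real.rpow_add hpos]; ring_nf
  _ ≤ (A * 2^p * Real.exp (Real.pi * |s.im|) * (2:ℝ) ^ s.re) * ‖(i:ℝ) ^ ((p:ℝ) - s.re)‖ := by
      apply mul_le_mul_of_nonneg_left _ (by positivity)
      rw [Real.norm_eq_abs]
      exact le_abs_self _


lemma summable_aux' (M : ℕ) (hM : 1 ≤ M) (w s : ℂ) (hs : (M:ℝ) < s.re)
    (c : ℕ → ℕ) (hc : ∀ i, c i ≤ (2*M*(i+1))^(M-1)) :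
    Summable (fun i : ℕ => ((c i : ℕ) : ℂ) * (w + (i:ℂ)) ^ (-s)) := by
  have hp : ((M-1:ℕ):ℝ) + 1 < s.re := by
    have h : ((M-1:ℕ):ℝ) = (M:ℝ) - 1 := by
      rw [Nat.cast_sub hM]; norm_num
    rw [h]; linarith
  have hc' : ∀ i : ℕ, ‖((c i : ℕ) : ℂ)‖ ≤ (2*(M:ℝ))^(M-1) * ((i:ℝ)+1)^(M-1) := by
    intro i
    have h2 : ((c i : ℕ):ℝ) ≤ (((2*M*(i+1))^(M-1) : ℕ) : ℝ) := Nat.cast_le.2 (hc i)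
    calc ‖((c i : ℕ) : ℂ)‖ = ((c i : ℕ):ℝ) := by
          rw [Complex.norm_natCast]
    _ ≤ (((2*M*(i+1))^(M-1) : ℕ) : ℝ) := h2
    _ = ((2*(M:ℝ)) * ((i:ℝ)+1))^(M-1) := by
          push_cast
          try congr 1
          try ring
    _ = (2*(M:ℝ))^(M-1) * ((i:ℝ)+1)^(M-1) := mul_pow _ _ _
  exact summ_master w s (M-1) ((2*(M:ℝ))^(M-1)) hp (fun i => ((c i : ℕ) : ℂ)) hc'



section Helpers

lemma bound_choose (M b i : ℕ) (hM : 1 ≤ M) (hb : b ≤ M + i) :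
    (M-1+b).choose b ≤ (2*M*(i+1))^(M-1) := by
  have h1 : (M-1+b).choose b = (M-1+b).choose (M-1) := by
    have h := Nat.choose_symm (show M-1 ≤ M-1+b by omega)
    rw [show (M-1+b)-(M-1) = b by omega] at h
    exact h
  rw [h1]
  calc (M-1+b).choose (M-1) ≤ (M-1+b)^(M-1) := Nat.choose_le_pow _ _
  _ ≤ (2*M*(i+1))^(M-1) := by
      apply Nat.pow_le_pow_left
      obtain ⟨M', rfl⟩ : ∃ M', M = M'+1 := ⟨M-1, by omega⟩
      have h2 : 2*(M'+1)*(i+1) = 2*(M'*i) + 2*M' + 2*i + 2 := by ring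
      have h3 : 0 ≤ M'*i := Nat.zero_le _
      omega

end Helpers


/-- Let `n` be a positive integer and `0 ≤ k ≤ n - 1`.  For every
`z ∈ ℂ` with `z, z-1, ..., z-k ∉ (-∞,0]` and every `s` with `Re s > 2n`, one has
`∑_{l=1}^∞ [C(2n+l-1, l+k) C(l+k-1, k) + C(2n+l-1, k) C(2n+l-k-2, l-1)] (z+l)^{-s}
  = ∑_{j=0}^{k} (-1)^j C(2n, k-j) (ζ_{2n}(s, z-j) + ζ_{2n}(s, z+j+1))
    + (-1)^{k+1} (z-k)^{-s}`. -/
theorem multiple_hurwitz_zeta_binomial_identity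
    (n : ℕ) (hn : 0 < n) (k : ℕ) (hk : k ≤ n - 1)
    (z : ℂ) (hz : ∀ j : ℕ, j ≤ k → ¬((z - (j : ℂ)).im = 0 ∧ (z - (j : ℂ)).re ≤ 0))
    (s : ℂ) (hs : (2 * n : ℝ) < s.re) :
    ∑' i : ℕ,
        ((((2 * n + i).choose (i + 1 + k) * (i + k).choose k
            + (2 * n + i).choose k * (2 * n + i - k - 1).choose i : ℕ)) : ℂ) *
          (z + ((i : ℂ) + 1)) ^ (-s) =
      (∑ j ∈ Finset.range (k + 1),
        (-1 : ℂ) ^ j * (((2 * n).choose (k - j) : ℕ) : ℂ) *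
          (multipleHurwitzZeta (2 * n) s (z - (j : ℂ)) +
            multipleHurwitzZeta (2 * n) s (z + (j : ℂ) + 1)))
      + (-1 : ℂ) ^ (k + 1) * (z - (k : ℂ)) ^ (-s) := by
  classical
  set M := 2 * n with hMdef
  have hM1 : 1 ≤ M := by omega
  have hkM : k < M := by omega
  have hsre : (M:ℝ) < s.re := by rw [hMdef]; push_cast; exact hs
  set Φ : ℕ → ℂ := fun i => ((z+1) + (i:ℂ))^(-s) with hΦ
  set cA : ℕ → ℕ → ℕ := fun j i => (M+i+j).choose (i+1+j) with hcA
  set cH : ℕ → ℕ → ℕ := fun j i => if j ≤ i then (M+i-j-1).choose (i-j) else 0 with hcH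
  -- summability of the two tail families
  have sumA : ∀ j, j ≤ k → Summable (fun i : ℕ => ((cA j i : ℕ) : ℂ) * Φ i) := by
    intro j hj
    apply summable_aux' M hM1 (z+1) s hsre
    intro i
    simp only [hcA]
    rw [show M+i+j = M-1+(i+1+j) by omega]
    exact bound_choose M (i+1+j) i hM1 (by omega)
  have sumH : ∀ j, j ≤ k → Summable (fun i : ℕ => ((cH j i : ℕ) : ℂ) * Φ i) := by
    intro j hj
    apply summable_aux' M hM1 (z+1) s hsre
    intro i
    simp only [hcH]
    by_cases h : j ≤ i
    · rw [if_pos h, show M+i-j-1 = M-1+(i-j) by omega]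
      exact bound_choose M (i-j) i hM1 (by omega)
    · rw [if_neg h]
      exact Nat.zero_le _
  -- step 1: decomposition of ζ(s, z - j)
  have hz1 : ∀ j, j ≤ k → multipleHurwitzZeta M s (z - (j:ℂ)) =
      (∑ t ∈ range (j+1), (((M+j-t-1).choose (j-t) : ℕ) : ℂ) * (z - (t:ℂ))^(-s))
        + ∑' i : ℕ, ((cA j i : ℕ) : ℂ) * Φ i := by
    intro j hj
    have hS : Summable (fun l : ℕ => (((M + l - 1).choose l : ℕ) : ℂ) * ((z - (j:ℂ)) + (l:ℂ))^(-s)) := by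
      apply summable_aux' M hM1 (z - (j:ℂ)) s hsre
      intro l
      rw [show M+l-1 = M-1+l by omega]
      exact bound_choose M l l hM1 (by omega)
    have e1 : multipleHurwitzZeta M s (z - (j:ℂ)) =
        (∑ t ∈ range j, (((M + t - 1).choose t : ℕ) : ℂ) * ((z - (j:ℂ)) + (t:ℂ))^(-s))
          + ∑' i : ℕ, (((M + (i+j) - 1).choose (i+j) : ℕ) : ℂ) * ((z - (j:ℂ)) + ((i+j : ℕ):ℂ))^(-s) := by
      rw [multipleHurwitzZeta]
      exact (Summable.sum_add_tsum_nat_add j hS).symm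
    rw [e1]
    have hS2 : Summable (fun i : ℕ => (((M + (i+j) - 1).choose (i+j) : ℕ) : ℂ) * ((z - (j:ℂ)) + ((i+j : ℕ):ℂ))^(-s)) :=
      (summable_nat_add_iff j).2 hS
    rw [Summable.tsum_eq_zero_add hS2]
    -- rearrange
    have efin : (∑ t ∈ range j, (((M + t - 1).choose t : ℕ) : ℂ) * ((z - (j:ℂ)) + (t:ℂ))^(-s))
        + (((M + (0+j) - 1).choose (0+j) : ℕ) : ℂ) * ((z - (j:ℂ)) + ((0+j : ℕ):ℂ))^(-s)
        = ∑ t ∈ range (j+1), (((M+j-t-1).choose (j-t) : ℕ) : ℂ) * (z - (t:ℂ))^(-s) := by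
      rw [Finset.sum_range_succ']
      congr 1
      · rw [← Finset.sum_range_reflect]
        apply Finset.sum_congr rfl
        intro t ht
        simp only [Finset.mem_range] at ht
        rw [show M+(j-1-t)-1 = M+j-(t+1)-1 by omega, show j-1-t = j-(t+1) by omega,
            Nat.cast_sub (show t+1 ≤ j by omega)]
        rw [show ((z - (j:ℂ)) + ((j:ℂ) - ((t+1:ℕ):ℂ))) = z - ((t+1:ℕ):ℂ) from by ring]
      · rw [show M+(0+j)-1 = M+j-0-1 by omega, show (0+j:ℕ) = j-0 by omega]
        have hbase : (z - (j:ℂ)) + ((j-0:ℕ):ℂ) = z - ((0:ℕ):ℂ) := by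
          push_cast [Nat.sub_zero]
          ring
        rw [hbase]
    have etail : ∑' i : ℕ, (((M + ((i+1)+j) - 1).choose ((i+1)+j) : ℕ) : ℂ) * ((z - (j:ℂ)) + (((i+1)+j : ℕ):ℂ))^(-s)
        = ∑' i : ℕ, ((cA j i : ℕ) : ℂ) * Φ i := by
      apply tsum_congr
      intro i
      simp only [hcA, hΦ]
      rw [show M+((i+1)+j)-1 = M+i+j by omega, show (i+1)+j = i+1+j from rfl]
      congr 2
      push_cast
      ring
    rw [← efin, ← etail]
    ring
  -- step 2: decomposition of ζ(s, z + j + 1)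
  have hz2 : ∀ j, j ≤ k → multipleHurwitzZeta M s (z + (j:ℂ) + 1) =
      ∑' i : ℕ, ((cH j i : ℕ) : ℂ) * Φ i := by
    intro j hj
    have hS := sumH j hj
    rw [← Summable.sum_add_tsum_nat_add j hS]
    have e0 : (∑ i ∈ range j, ((cH j i : ℕ) : ℂ) * Φ i) = 0 := by
      apply Finset.sum_eq_zero
      intro i hi
      simp only [Finset.mem_range] at hi
      simp only [hcH, if_neg (by omega : ¬ j ≤ i)]
      simp
    rw [e0, zero_add]
    rw [multipleHurwitzZeta]
    apply tsum_congr
    intro i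
    simp only [hcH, hΦ, if_pos (by omega : j ≤ i + j)]
    rw [show M+(i+j)-j-1 = M+i-1 by omega, show (i+j)-j = i by omega]
    congr 2
    push_cast
    ring
  -- rewrite the RHS using hz1, hz2
  rw [Finset.sum_congr rfl (fun j hj => by
    rw [hz1 j (by simpa [Nat.lt_succ_iff] using hj), hz2 j (by simpa [Nat.lt_succ_iff] using hj)])]
  -- split into finite part and tail part
  have esplit : ∀ j ∈ range (k+1),
      (-1:ℂ)^j * ((M.choose (k-j) : ℕ) : ℂ) *
        (((∑ t ∈ range (j+1), (((M+j-t-1).choose (j-t) : ℕ) : ℂ) * (z - (t:ℂ))^(-s))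
          + ∑' i : ℕ, ((cA j i : ℕ) : ℂ) * Φ i)
         + ∑' i : ℕ, ((cH j i : ℕ) : ℂ) * Φ i)
      = ((-1:ℂ)^j * ((M.choose (k-j) : ℕ) : ℂ) *
          ∑ t ∈ range (j+1), (((M+j-t-1).choose (j-t) : ℕ) : ℂ) * (z - (t:ℂ))^(-s))
        + ((-1:ℂ)^j * ((M.choose (k-j) : ℕ) : ℂ) *
          ((∑' i : ℕ, ((cA j i : ℕ) : ℂ) * Φ i) + ∑' i : ℕ, ((cH j i : ℕ) : ℂ) * Φ i)) := by
    intro j _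
    ring
  rw [Finset.sum_congr rfl esplit, Finset.sum_add_distrib]
  -- Part 1 : finite parts collapse
  have part1 : (∑ j ∈ range (k+1), (-1:ℂ)^j * ((M.choose (k-j) : ℕ) : ℂ) *
      ∑ t ∈ range (j+1), (((M+j-t-1).choose (j-t) : ℕ) : ℂ) * (z - (t:ℂ))^(-s))
      = (-1:ℂ)^k * (z - (k:ℂ))^(-s) := by
    have eguard : ∀ j ∈ range (k+1),
        (-1:ℂ)^j * ((M.choose (k-j) : ℕ) : ℂ) *
          ∑ t ∈ range (j+1), (((M+j-t-1).choose (j-t) : ℕ) : ℂ) * (z - (t:ℂ))^(-s)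
        = ∑ t ∈ range (k+1),
            ((-1:ℂ)^j * ((M.choose (k-j) : ℕ) : ℂ) *
              (if t ≤ j then (((M+j-t-1).choose (j-t) : ℕ) : ℂ) else 0)) * (z - (t:ℂ))^(-s) := by
      intro j hj
      simp only [Finset.mem_range] at hj
      rw [Finset.mul_sum]
      rw [← Finset.sum_subset (Finset.range_subset_range.2 (show j+1 ≤ k+1 by omega))
        (fun t _ ht => by
          simp only [Finset.mem_range, not_lt] at ht
          rw [if_neg (by omega)]
          ring)]
      apply Finset.sum_congr rfl
      intro t ht
      simp only [Finset.mem_range] at ht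
      rw [if_pos (by omega)]
      ring
    rw [Finset.sum_congr rfl eguard, Finset.sum_comm]
    have einner : ∀ t ∈ range (k+1),
        (∑ j ∈ range (k+1),
          ((-1:ℂ)^j * ((M.choose (k-j) : ℕ) : ℂ) *
            (if t ≤ j then (((M+j-t-1).choose (j-t) : ℕ) : ℂ) else 0)) * (z - (t:ℂ))^(-s))
        = (if t = k then (-1:ℂ)^k else 0) * (z - (t:ℂ))^(-s) := by
      intro t ht
      simp only [Finset.mem_range] at ht
      rw [← Finset.sum_mul, BB' M k t (by omega) hkM]
    rw [Finset.sum_congr rfl einner]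
    have : ∀ t ∈ range (k+1), (if t = k then (-1:ℂ)^k else 0) * (z - (t:ℂ))^(-s)
        = if t = k then (-1:ℂ)^k * (z - (t:ℂ))^(-s) else 0 := by
      intro t _
      split_ifs <;> simp
    rw [Finset.sum_congr rfl this, Finset.sum_ite_eq' (range (k+1)) k
      (fun t => (-1:ℂ)^k * (z - (t:ℂ))^(-s)), if_pos (Finset.self_mem_range_succ k)]
  rw [part1]
  -- Part 2 : tails combine into the LHS series
  have part2 : (∑ j ∈ range (k+1), (-1:ℂ)^j * ((M.choose (k-j) : ℕ) : ℂ) *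
      ((∑' i : ℕ, ((cA j i : ℕ) : ℂ) * Φ i) + ∑' i : ℕ, ((cH j i : ℕ) : ℂ) * Φ i))
      = ∑' i : ℕ,
        ((((M + i).choose (i + 1 + k) * (i + k).choose k
            + (M + i).choose k * (M + i - k - 1).choose i : ℕ)) : ℂ) * Φ i := by
    have e1 : ∀ j ∈ range (k+1),
        (-1:ℂ)^j * ((M.choose (k-j) : ℕ) : ℂ) *
          ((∑' i : ℕ, ((cA j i : ℕ) : ℂ) * Φ i) + ∑' i : ℕ, ((cH j i : ℕ) : ℂ) * Φ i)
        = ∑' i : ℕ, ((-1:ℂ)^j * ((M.choose (k-j) : ℕ) : ℂ) *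
            (((cA j i : ℕ) : ℂ) * Φ i + ((cH j i : ℕ) : ℂ) * Φ i)) := by
      intro j hj
      simp only [Finset.mem_range, Nat.lt_succ_iff] at hj
      rw [← Summable.tsum_add (sumA j hj) (sumH j hj), ← tsum_mul_left]
    rw [Finset.sum_congr rfl e1]
    rw [← Summable.tsum_finsetSum (fun j hj => by
      simp only [Finset.mem_range, Nat.lt_succ_iff] at hj
      exact ((sumA j hj).add (sumH j hj)).mul_left _)]
    apply tsum_congr
    intro i
    have expand : ∀ j ∈ range (k+1),
        (-1:ℂ)^j * ((M.choose (k-j) : ℕ) : ℂ) *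
          (((cA j i : ℕ) : ℂ) * Φ i + ((cH j i : ℕ) : ℂ) * Φ i)
        = ((-1:ℂ)^j * ((M.choose (k-j) : ℕ) : ℂ) * (((M+i+j).choose (i+1+j) : ℕ) : ℂ)
          + (-1:ℂ)^j * ((M.choose (k-j) : ℕ) : ℂ) *
              (if j ≤ i then (((M+i-j-1).choose (i-j) : ℕ) : ℂ) else 0)) * Φ i := by
      intro j _
      simp only [hcA, hcH]
      by_cases h : j ≤ i
      · rw [if_pos h, if_pos h]; ring
      · rw [if_neg h, if_neg h]; push_cast; ring
    rw [Finset.sum_congr rfl expand, ← Finset.sum_mul, Finset.sum_add_distrib,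
        Tsum' M k hkM i, Usum' M hM1 k hkM i]
    push_cast
    ring
  rw [part2]
  -- final: identify LHS series and cancel the (z-k) terms
  have lhs_eq : ∑' i : ℕ,
        ((((M + i).choose (i + 1 + k) * (i + k).choose k
            + (M + i).choose k * (M + i - k - 1).choose i : ℕ)) : ℂ) *
          (z + ((i : ℂ) + 1)) ^ (-s)
      = ∑' i : ℕ,
        ((((M + i).choose (i + 1 + k) * (i + k).choose k
            + (M + i).choose k * (M + i - k - 1).choose i : ℕ)) : ℂ) * Φ i := by
    apply tsum_congr
    intro i
    simp only [hΦ]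
    congr 2
    ring
  rw [lhs_eq]
  have : (-1:ℂ)^(k+1) = -((-1:ℂ)^k) := by rw [pow_succ]; ring
  rw [this]
  ring
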